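/- Write b_1(t) := x_{1,2n}(t) and b_i(t) := x_{i,2n+4-2i}(t) for 2 ≤ i ≤ n. Then: (1) for every t ≥ 2n, the natural number Σ_{i=1}^{n} (if b_i(t) then 2^{i-1} else 0) equals (t - 2n) mod 2^n; (2) for every t < 2n, b_i(t) = false for all 1 ≤ i ≤ n; (3) for every string σ ∈ {false, true}^n there is a unique time t with 2n ≤ t ≤ 2n + 2^n - 1 such that b_i(t) = σ_i for all 1 ≤ i ≤ n. -/

import Mathlib

namespace Stmt4Aux

def Cc (i s : ℕ) : Bool := decide (2 ^ i - 2 ≤ s % 2 ^ i)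

lemma two_pow_succ_eq (m : ℕ) : 2 ^ (m + 1) = 2 ^ m * 2 := pow_succ 2 m

lemma mod_pow_succ_eq (s m : ℕ) : s % 2 ^ (m + 1) = s % 2 + 2 * (s / 2 % 2 ^ m) := by
  rw [two_pow_succ_eq, mul_comm (2 ^ m) 2, Nat.mod_mul]

lemma mod_pow_succ_eq' (s m : ℕ) : s % 2 ^ (m + 1) = s % 2 ^ m + 2 ^ m * (s / 2 ^ m % 2) := by
  rw [two_pow_succ_eq, Nat.mod_mul]

lemma tb_inc (k u : ℕ) :
    Nat.testBit (u + 1) k = xor (Nat.testBit u k) (decide (u % 2 ^ k = 2 ^ k - 1)) := by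
  induction k generalizing u with
  | zero =>
    simp only [Nat.testBit_zero, pow_zero, Nat.mod_one]
    rcases Nat.mod_two_eq_zero_or_one u with h | h <;> simp [Nat.add_mod, h]
  | succ m ih =>
    rw [Nat.testBit_succ, Nat.testBit_succ]
    have hd := mod_pow_succ_eq u m
    have hp := two_pow_succ_eq m
    have h2 : (0:ℕ) < 2 ^ m := Nat.pow_pos (by norm_num)
    have h3 : u / 2 % 2 ^ m < 2 ^ m := Nat.mod_lt _ h2
    rcases Nat.mod_two_eq_zero_or_one u with h | h
    · have he : (u + 1) / 2 = u / 2 := by omega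
      rw [he]
      have hne : ¬ (u % 2 ^ (m+1) = 2 ^ (m+1) - 1) := by omega
      simp [hne]
    · have he : (u + 1) / 2 = u / 2 + 1 := by omega
      rw [he, ih]
      have hiff : (u % 2 ^ (m+1) = 2 ^ (m+1) - 1) ↔ (u / 2 % 2 ^ m = 2 ^ m - 1) := by omega
      congr 1
      simp only [decide_eq_decide]
      exact hiff.symm

lemma tb_add_two_zero (s : ℕ) : Nat.testBit (s + 2) 0 = Nat.testBit s 0 := by
  simp [Nat.testBit_zero, Nat.add_mod]

lemma tb_add_two (i s : ℕ) (hi : 1 ≤ i) :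
    Nat.testBit (s + 2) i = xor (Nat.testBit s i) (Cc i s) := by
  obtain ⟨m, rfl⟩ : ∃ m, i = m + 1 := ⟨i - 1, by omega⟩
  rw [Nat.testBit_succ, Nat.testBit_succ]
  have he : (s + 2) / 2 = s / 2 + 1 := by omega
  rw [he, tb_inc]
  congr 1
  unfold Cc
  have hd := mod_pow_succ_eq s m
  have hp := two_pow_succ_eq m
  have h2 : (0:ℕ) < 2 ^ m := Nat.pow_pos (by norm_num)
  have h3 : s / 2 % 2 ^ m < 2 ^ m := Nat.mod_lt _ h2
  have h4 : s % 2 < 2 := Nat.mod_lt _ (by norm_num)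
  have hiff : (s / 2 % 2 ^ m = 2 ^ m - 1) ↔ (2 ^ (m+1) - 2 ≤ s % 2 ^ (m+1)) := by omega
  simp only [decide_eq_decide]
  exact hiff

lemma tb_add_two_one (s : ℕ) : Nat.testBit (s + 2) 1 = !(Nat.testBit s 1) := by
  rw [tb_add_two 1 s le_rfl]
  have : Cc 1 s = true := by unfold Cc; simp
  simp [this]

lemma cc_two (s : ℕ) : Cc 2 s = Nat.testBit s 1 := by
  unfold Cc
  rw [Nat.testBit_succ, Nat.testBit_zero]
  have hd := mod_pow_succ_eq s 1
  have h4 : s % 2 < 2 := Nat.mod_lt _ (by norm_num)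
  have h5 : s / 2 % 2 ^ 1 < 2 ^ 1 := Nat.mod_lt _ (by norm_num)
  have h6 : s / 2 % 2 ^ 1 = s / 2 % 2 := by norm_num
  simp only [decide_eq_decide]
  omega

lemma cc_step (i s : ℕ) (hi : 3 ≤ i) :
    Cc i s = (Nat.testBit s (i - 1) && Cc (i - 1) s) := by
  obtain ⟨m, rfl⟩ : ∃ m, i = m + 1 := ⟨i - 1, by omega⟩
  simp only [Nat.add_sub_cancel]
  unfold Cc
  have hd := mod_pow_succ_eq' s m
  have hp := two_pow_succ_eq m
  have h2 : (0:ℕ) < 2 ^ m := Nat.pow_pos (by norm_num)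
  have h3 : s % 2 ^ m < 2 ^ m := Nat.mod_lt _ h2
  have h5 : s / 2 ^ m % 2 < 2 := Nat.mod_lt _ (by norm_num)
  have h6 : 4 ≤ 2 ^ m := by
    calc (4:ℕ) = 2 ^ 2 := by norm_num
    _ ≤ 2 ^ m := Nat.pow_le_pow_right (by norm_num) (by omega)
  have htb : Nat.testBit s m = decide (s / 2 ^ m % 2 = 1) := Nat.testBit_eq_decide_div_mod_eq ..
  rw [htb]
  rcases (by omega : s / 2 ^ m % 2 = 0 ∨ s / 2 ^ m % 2 = 1) with h | h
  · rw [h] at hd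
    have hne : ¬ (2 ^ (m+1) - 2 ≤ s % 2 ^ (m+1)) := by omega
    simp [hne, h]
  · rw [h] at hd
    have hiff : (2 ^ (m+1) - 2 ≤ s % 2 ^ (m+1)) ↔ (2 ^ m - 2 ≤ s % 2 ^ m) := by omega
    simp [h, hiff]

lemma cc_zero (i : ℕ) (hi : 2 ≤ i) : Cc i 0 = false := by
  unfold Cc
  have : 4 ≤ 2 ^ i := by
    calc (4:ℕ) = 2 ^ 2 := by norm_num
    _ ≤ 2 ^ i := Nat.pow_le_pow_right (by norm_num) hi
  simp; omega

lemma tb_small (s i : ℕ) (hs : s < 4) (hi : 2 ≤ i) : Nat.testBit s i = false := by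
  apply Nat.testBit_lt_two_pow
  calc s < 4 := hs
  _ = 2 ^ 2 := by norm_num
  _ ≤ 2 ^ i := Nat.pow_le_pow_right (by norm_num) hi

lemma sum_range_testBit (m n : ℕ) :
    (∑ j ∈ Finset.range n, if Nat.testBit m j then 2 ^ j else 0) = m % 2 ^ n := by
  induction n with
  | zero => simp [Nat.mod_one]
  | succ k ih =>
    rw [Finset.sum_range_succ, ih]
    have hd := mod_pow_succ_eq' m k
    have htb : Nat.testBit m k = decide (m / 2 ^ k % 2 = 1) := Nat.testBit_eq_decide_div_mod_eq ..
    have h5 : m / 2 ^ k % 2 < 2 := Nat.mod_lt _ (by norm_num)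
    rw [hd, htb]
    rcases (by omega : m / 2 ^ k % 2 = 0 ∨ m / 2 ^ k % 2 = 1) with h | h <;> simp [h]

lemma sum_Icc_testBit (m n : ℕ) :
    (∑ i ∈ Finset.Icc 1 n, if Nat.testBit m (i - 1) then 2 ^ (i - 1) else 0) = m % 2 ^ n := by
  rw [← sum_range_testBit m n]
  induction n with
  | zero => simp
  | succ k ih => rw [Finset.sum_Icc_succ_top (by omega), ih, Finset.sum_range_succ]; simp

end Stmt4Aux



/-- The delayed neurons of the counter circuit, read as the bits `b_1 = x_{1,2n}` and
`b_i = x_{i,2n+4-2i}` (for `2 ≤ i ≤ n`), count through the binary representations of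
`(t - 2n) mod 2^n` for `t ≥ 2n`, are all `false` before time `2n`, and every `n`-bit
string appears at a unique time in `[2n, 2n + 2^n - 1]`. -/
theorem stmt_4
    (n : ℕ) (hn : 2 ≤ n)
    (I : ℕ → Bool) (x : ℕ → ℕ → Bool) (x1' x2' : ℕ → Bool)
    (y' y a b : ℕ → ℕ → Bool)
    (hI0 : I 0 = true) (hI : ∀ t, 1 ≤ t → I t = false)
    (hx0 : ∀ i, 1 ≤ i → i ≤ n → x i 0 = false)
    (hx1'0 : x1' 0 = false) (hx2'0 : x2' 0 = false)
    (hy'0 : ∀ i, 2 ≤ i → i ≤ n - 1 → y' i 0 = false)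
    (hy0 : ∀ i, 2 ≤ i → i ≤ n - 1 → y i 0 = false)
    (ha0 : ∀ i, 1 < i → i < n → a i 0 = false)
    (hb0 : ∀ i, 1 < i → i < n → b i 0 = false)
    (hx1 : ∀ t, x 1 (t + 1) = (I t || x1' t))
    (hx1' : ∀ t, x1' (t + 1) = x 1 t)
    (hx2' : ∀ t, x2' (t + 1) = (I t || !(x 2 t)))
    (hx2 : ∀ t, x 2 (t + 1) = x2' t)
    (hy2' : ∀ t, y' 2 (t + 1) = x 2 t)
    (hyi' : ∀ i, 2 < i → i < n → ∀ t, y' i (t + 1) = (x i t && y (i - 1) t))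
    (hyi : ∀ i, 1 < i → i < n → ∀ t, y i (t + 1) = y' i t)
    (hai : ∀ i, 1 < i → i < n → ∀ t, a i (t + 1) = (y i t && !(x (i + 1) t)))
    (hbi : ∀ i, 1 < i → i < n → ∀ t, b i (t + 1) = (!(y i t) && x (i + 1) t))
    (hxi : ∀ i, 2 < i → i ≤ n → ∀ t, x i (t + 1) = (a (i - 1) t || b (i - 1) t))
    (xd1 : ℕ → ℕ → Bool)
    (hxd10 : ∀ j, 1 ≤ j → j ≤ 2 * n → xd1 j 0 = false)
    (hxd11 : ∀ t, xd1 1 (t + 1) = x 1 t)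
    (hxd1j : ∀ j, 2 ≤ j → j ≤ 2 * n → ∀ t, xd1 j (t + 1) = xd1 (j - 1) t)
    (xd : ℕ → ℕ → ℕ → Bool)
    (hxd0 : ∀ i j, 2 ≤ i → i ≤ n → 1 ≤ j → j ≤ 2 * n + 4 - 2 * i → xd i j 0 = false)
    (hxd1' : ∀ i, 2 ≤ i → i ≤ n → ∀ t, xd i 1 (t + 1) = x i t)
    (hxdj : ∀ i j, 2 ≤ i → i ≤ n → 2 ≤ j → j ≤ 2 * n + 4 - 2 * i → ∀ t,
      xd i j (t + 1) = xd i (j - 1) t)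
    (B : ℕ → ℕ → Bool)
    (hB1 : ∀ t, B 1 t = xd1 (2 * n) t)
    (hBi : ∀ i, 2 ≤ i → i ≤ n → ∀ t, B i t = xd i (2 * n + 4 - 2 * i) t) :
    (∀ t, 2 * n ≤ t →
      (∑ i ∈ Finset.Icc 1 n, if B i t then 2 ^ (i - 1) else 0) = (t - 2 * n) % 2 ^ n) ∧
    (∀ t, t < 2 * n → ∀ i, 1 ≤ i → i ≤ n → B i t = false) ∧
    (∀ σ : ℕ → Bool, ∃! t,
      2 * n ≤ t ∧ t ≤ 2 * n + 2 ^ n - 1 ∧ ∀ i, 1 ≤ i → i ≤ n → B i t = σ i) := by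
  have hc4 : ∀ s, Nat.testBit s 1 = Stmt4Aux.Cc 2 s := fun s => (Stmt4Aux.cc_two s).symm
  -- main closed forms for the circuit
  have key : ∀ t,
      (x 1 t = Nat.testBit t 0) ∧
      (x1' t = Nat.testBit (t - 1) 0) ∧
      (x2' t = Nat.testBit (t + 1) 1) ∧
      (∀ i, 2 ≤ i → i ≤ n → x i t = Nat.testBit (t - (2 * i - 4)) (i - 1)) ∧
      (∀ i, 2 ≤ i → i ≤ n - 1 → y' i t = Stmt4Aux.Cc i (t - (2 * i - 3))) ∧
      (∀ i, 2 ≤ i → i ≤ n - 1 → y i t = Stmt4Aux.Cc i (t - (2 * i - 2))) ∧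
      (∀ i, 2 ≤ i → i ≤ n - 1 → a i t =
        (Stmt4Aux.Cc i (t - (2 * i - 1)) && !(Nat.testBit (t - (2 * i - 1)) i))) ∧
      (∀ i, 2 ≤ i → i ≤ n - 1 → b i t =
        (!(Stmt4Aux.Cc i (t - (2 * i - 1))) && Nat.testBit (t - (2 * i - 1)) i)) := by
    intro t
    induction t with
    | zero =>
      refine ⟨?_, ?_, ?_, ?_, ?_, ?_, ?_, ?_⟩
      · rw [hx0 1 (by omega) (by omega)]; simp [Nat.zero_testBit]
      · rw [hx1'0]; simp [Nat.zero_testBit]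
      · rw [hx2'0]; decide
      · intro i h2 hn'
        rw [hx0 i (by omega) hn', Nat.zero_sub, Nat.zero_testBit]
      · intro i h2 hn'
        rw [hy'0 i h2 hn', Nat.zero_sub, Stmt4Aux.cc_zero i h2]
      · intro i h2 hn'
        rw [hy0 i h2 hn', Nat.zero_sub, Stmt4Aux.cc_zero i h2]
      · intro i h2 hn'
        rw [ha0 i (by omega) (by omega), Nat.zero_sub, Stmt4Aux.cc_zero i h2]
        simp
      · intro i h2 hn'
        rw [hb0 i (by omega) (by omega), Nat.zero_sub, Nat.zero_testBit]
        simp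
    | succ t ih =>
      obtain ⟨ih1, ih1', ih2', ih4, ih5, ih6, ih7, ih8⟩ := ih
      have g1 : x 1 (t + 1) = Nat.testBit (t + 1) 0 := by
        rw [hx1 t]
        rcases Nat.eq_zero_or_pos t with rfl | ht
        · rw [hI0]; simp [Nat.testBit_succ, Nat.testBit_zero]
        · rw [hI t ht, ih1']
          have e1 : t + 1 = (t - 1) + 2 := by omega
          rw [e1, Stmt4Aux.tb_add_two_zero]
          simp
      have g1' : x1' (t + 1) = Nat.testBit (t + 1 - 1) 0 := by
        rw [hx1' t, show t + 1 - 1 = t from rfl, ih1]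
      have g2' : x2' (t + 1) = Nat.testBit (t + 1 + 1) 1 := by
        rw [hx2' t]
        rcases Nat.eq_zero_or_pos t with rfl | ht
        · rw [hI0]; simp [Nat.testBit_succ, Nat.testBit_zero]
        · rw [hI t ht, ih4 2 le_rfl hn]
          have e1 : t - (2 * 2 - 4) = t := by omega
          rw [e1]
          have e2 : t + 1 + 1 = t + 2 := by omega
          rw [e2, Stmt4Aux.tb_add_two_one]
          simp [show (2:ℕ) - 1 = 1 from rfl]
      have g4 : ∀ i, 2 ≤ i → i ≤ n → x i (t + 1) = Nat.testBit (t + 1 - (2 * i - 4)) (i - 1) := by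
        intro i h2 hin
        rcases eq_or_lt_of_le h2 with rfl | h3
        · rw [hx2 t, ih2']
          congr 1 <;> omega
        · -- 3 ≤ i
          have h3' : 3 ≤ i := h3
          rw [hxi i h3 hin t, ih7 (i - 1) (by omega) (by omega),
            ih8 (i - 1) (by omega) (by omega)]
          have e0 : 2 * (i - 1) - 1 = 2 * i - 3 := by omega
          rw [e0]
          set s := t - (2 * i - 3) with hs
          by_cases hts : 2 * i - 3 ≤ t
          · have e1 : t + 1 - (2 * i - 4) = s + 2 := by omega
            rw [e1, Stmt4Aux.tb_add_two (i - 1) s (by omega)]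
            cases htb : Nat.testBit s (i - 1) <;> cases hcc : Stmt4Aux.Cc (i - 1) s <;> simp
          · have e1 : s = 0 := by omega
            rw [e1, Nat.zero_testBit, Stmt4Aux.cc_zero (i - 1) (by omega)]
            rw [(Stmt4Aux.tb_small (t + 1 - (2 * i - 4)) (i - 1) (by omega) (by omega))]
            simp
      have g5 : ∀ i, 2 ≤ i → i ≤ n - 1 →
          y' i (t + 1) = Stmt4Aux.Cc i (t + 1 - (2 * i - 3)) := by
        intro i h2 hin
        rcases eq_or_lt_of_le h2 with rfl | h3
        · rw [hy2' t, ih4 2 le_rfl hn, hc4]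
          congr 1 <;> omega
        · have h3' : 3 ≤ i := h3
          rw [hyi' i h3 (by omega) t, ih4 i h2 (by omega), ih6 (i - 1) (by omega) (by omega)]
          have e0 : 2 * (i - 1) - 2 = 2 * i - 4 := by omega
          rw [e0]
          have e1 : t + 1 - (2 * i - 3) = t - (2 * i - 4) := by omega
          rw [e1, Stmt4Aux.cc_step i _ h3']
      have g6 : ∀ i, 2 ≤ i → i ≤ n - 1 →
          y i (t + 1) = Stmt4Aux.Cc i (t + 1 - (2 * i - 2)) := by
        intro i h2 hin
        rw [hyi i (by omega) (by omega) t, ih5 i h2 hin]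
        congr 1 <;> omega
      have g7 : ∀ i, 2 ≤ i → i ≤ n - 1 → a i (t + 1) =
          (Stmt4Aux.Cc i (t + 1 - (2 * i - 1)) && !(Nat.testBit (t + 1 - (2 * i - 1)) i)) := by
        intro i h2 hin
        rw [hai i (by omega) (by omega) t, ih6 i h2 hin]
        have h4i := ih4 (i + 1) (by omega) (by omega)
        have e1 : 2 * (i + 1) - 4 = 2 * i - 2 := by omega
        have e2 : i + 1 - 1 = i := by omega
        rw [e1, e2] at h4i
        rw [h4i]
        have e3 : t + 1 - (2 * i - 1) = t - (2 * i - 2) := by omega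
        rw [e3]
      have g8 : ∀ i, 2 ≤ i → i ≤ n - 1 → b i (t + 1) =
          (!(Stmt4Aux.Cc i (t + 1 - (2 * i - 1))) && Nat.testBit (t + 1 - (2 * i - 1)) i) := by
        intro i h2 hin
        rw [hbi i (by omega) (by omega) t, ih6 i h2 hin]
        have h4i := ih4 (i + 1) (by omega) (by omega)
        have e1 : 2 * (i + 1) - 4 = 2 * i - 2 := by omega
        have e2 : i + 1 - 1 = i := by omega
        rw [e1, e2] at h4i
        rw [h4i]
        have e3 : t + 1 - (2 * i - 1) = t - (2 * i - 2) := by omega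
        rw [e3]
      exact ⟨g1, g1', g2', g4, g5, g6, g7, g8⟩
  -- delay line for x1
  have d1 : ∀ t j, 1 ≤ j → j ≤ 2 * n → xd1 j t = Nat.testBit (t - j) 0 := by
    intro t
    induction t with
    | zero =>
      intro j h1 h2
      rw [hxd10 j h1 h2, Nat.zero_sub, Nat.zero_testBit]
    | succ t ih =>
      intro j h1 h2
      rcases eq_or_lt_of_le h1 with rfl | hj
      · rw [hxd11 t, (key t).1]
        congr 1 <;> omega
      · rw [hxd1j j hj h2 t, ih (j - 1) (by omega) (by omega)]
        congr 1 <;> omega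
  -- delay lines for x i
  have d2 : ∀ t i j, 2 ≤ i → i ≤ n → 1 ≤ j → j ≤ 2 * n + 4 - 2 * i →
      xd i j t = Nat.testBit (t - j - (2 * i - 4)) (i - 1) := by
    intro t
    induction t with
    | zero =>
      intro i j hi1 hi2 h1 h2
      rw [hxd0 i j hi1 hi2 h1 h2, Nat.zero_sub, Nat.zero_sub, Nat.zero_testBit]
    | succ t ih =>
      intro i j hi1 hi2 h1 h2
      rcases eq_or_lt_of_le h1 with rfl | hj
      · rw [hxd1' i hi1 hi2 t, (key t).2.2.2.1 i hi1 hi2]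
        congr 1 <;> omega
      · rw [hxdj i j hi1 hi2 hj h2 t, ih i (j - 1) hi1 hi2 (by omega) (by omega)]
        congr 1 <;> omega
  -- the output bits
  have hBbit : ∀ i t, 1 ≤ i → i ≤ n → B i t = Nat.testBit (t - 2 * n) (i - 1) := by
    intro i t h1 h2
    rcases eq_or_lt_of_le h1 with rfl | hi
    · rw [hB1 t, d1 t (2 * n) (by omega) le_rfl]
    · rw [hBi i hi h2 t, d2 t i (2 * n + 4 - 2 * i) hi h2 (by omega) le_rfl]
      congr 1 <;> omega
  refine ⟨?_, ?_, ?_⟩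
  · -- part 1
    intro t _
    have : (∑ i ∈ Finset.Icc 1 n, if B i t then 2 ^ (i - 1) else 0) =
        ∑ i ∈ Finset.Icc 1 n, if Nat.testBit (t - 2 * n) (i - 1) then 2 ^ (i - 1) else 0 := by
      apply Finset.sum_congr rfl
      intro i hi
      rw [Finset.mem_Icc] at hi
      rw [hBbit i t hi.1 hi.2]
    rw [this, Stmt4Aux.sum_Icc_testBit]
  · -- part 2
    intro t ht i h1 h2
    rw [hBbit i t h1 h2]
    have : t - 2 * n = 0 := by omega
    rw [this, Nat.zero_testBit]
  · -- part 3
    intro σ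
    have hpow : 1 ≤ 2 ^ n := Nat.one_le_two_pow
    -- find v < 2^n whose bits are σ (· + 1)
    have sum_eq : ∀ m : ℕ, (∑ j ∈ Finset.range n,
        if Nat.testBit m j then 2 ^ j else 0) = m % 2 ^ n := fun m => Stmt4Aux.sum_range_testBit m n
    have finj : Function.Injective (fun (m : Fin (2 ^ n)) (j : Fin n) =>
        Nat.testBit m.val j.val) := by
      intro m1 m2 h
      have hs : (∑ j ∈ Finset.range n, if Nat.testBit m1.val j then 2 ^ j else 0) =
          ∑ j ∈ Finset.range n, if Nat.testBit m2.val j then 2 ^ j else 0 := by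
        apply Finset.sum_congr rfl
        intro j hj
        rw [Finset.mem_range] at hj
        have := congrFun h ⟨j, hj⟩
        simp only at this
        rw [this]
      rw [sum_eq, sum_eq, Nat.mod_eq_of_lt m1.isLt, Nat.mod_eq_of_lt m2.isLt] at hs
      exact Fin.ext hs
    have fbij : Function.Bijective (fun (m : Fin (2 ^ n)) (j : Fin n) =>
        Nat.testBit m.val j.val) := by
      rw [Fintype.bijective_iff_injective_and_card]
      refine ⟨finj, ?_⟩
      simp [Fintype.card_fun]
    obtain ⟨m, hm⟩ := fbij.surjective (fun j => σ (j.val + 1))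
    have hbits : ∀ j, j < n → Nat.testBit m.val j = σ (j + 1) := by
      intro j hj
      exact congrFun hm ⟨j, hj⟩
    have hv : m.val < 2 ^ n := m.isLt
    refine ⟨2 * n + m.val, ⟨by omega, by omega, ?_⟩, ?_⟩
    · intro i h1 h2
      rw [hBbit i _ h1 h2]
      have e1 : 2 * n + m.val - 2 * n = m.val := by omega
      rw [e1, hbits (i - 1) (by omega)]
      congr 1 <;> omega
    · rintro t' ⟨ht1, ht2, ht3⟩
      have hm' : t' - 2 * n < 2 ^ n := by omega
      have hsame : ∀ j, j < n → Nat.testBit (t' - 2 * n) j = Nat.testBit m.val j := by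
        intro j hj
        have h1 := ht3 (j + 1) (by omega) (by omega)
        rw [hBbit (j + 1) t' (by omega) (by omega)] at h1
        have e2 : j + 1 - 1 = j := by omega
        rw [e2] at h1
        rw [h1, hbits j hj]
      have hs : (∑ j ∈ Finset.range n, if Nat.testBit (t' - 2 * n) j then 2 ^ j else 0) =
          ∑ j ∈ Finset.range n, if Nat.testBit m.val j then 2 ^ j else 0 := by
        apply Finset.sum_congr rfl
        intro j hj
        rw [Finset.mem_range] at hj
        rw [hsame j hj]
      rw [sum_eq, sum_eq, Nat.mod_eq_of_lt hm', Nat.mod_eq_of_lt hv] at hs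
      omega
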